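/- Let α, β, κ be orientation-preserving homeomorphisms of ℝ with α²βα²β²α⁻¹β² = id, μ := α⁻¹β⁻² = κ^q, κ^{p−18q} = α⁻²βα⁻¹, q > 0, and suppose xκ > x for all x ∈ ℝ. Then xκ^{18q−p} > xκ^{8q} for all x ∈ ℝ, hence 18q − p > 8q, i.e. p/q < 10. -/
import Mathlib

lemma kpow_apply_add (κ : ℝ ≃o ℝ) (i j : ℤ) (x : ℝ) :
    (κ ^ (i + j)) x = (κ ^ i) ((κ ^ j) x) := by rw [zpow_add]; rfl

lemma kpow_le (κ : ℝ ≃o ℝ) (hκ : ∀ x : ℝ, x < κ x) :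
    ∀ n : ℤ, 0 ≤ n → ∀ x : ℝ, x ≤ (κ ^ n) x := by
  have hnat : ∀ k : ℕ, ∀ x : ℝ, x ≤ (κ ^ (k : ℤ)) x := by
    intro k
    induction k with
    | zero => intro x; simp
    | succ n ih =>
      intro x
      have h1 : (κ ^ ((n + 1 : ℕ) : ℤ)) x = (κ ^ (n : ℤ)) ((κ ^ (1 : ℤ)) x) := by
        rw [show ((n + 1 : ℕ) : ℤ) = (n : ℤ) + 1 by push_cast; ring, kpow_apply_add]
      rw [h1, zpow_one]
      exact le_trans (hκ x).le (ih (κ x))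
  intro n hn x
  have h := hnat n.toNat x
  rwa [Int.toNat_of_nonneg hn] at h

lemma kpow_lt (κ : ℝ ≃o ℝ) (hκ : ∀ x : ℝ, x < κ x) :
    ∀ n : ℤ, 0 < n → ∀ x : ℝ, x < (κ ^ n) x := by
  intro n hn x
  have h1 : (κ ^ n) x = (κ ^ (n - 1)) ((κ ^ (1 : ℤ)) x) := by
    rw [← kpow_apply_add, show n - 1 + 1 = n by ring]
  rw [h1, zpow_one]
  exact lt_of_lt_of_le (hκ x) (kpow_le κ hκ (n - 1) (by omega) (κ x))

lemma aux_false
    (a a' m m' T U : ℝ → ℝ)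
    (ha : StrictMono a) (hm : StrictMono m) (hTm : Monotone T)
    (haa' : ∀ x, a (a' x) = x) (ha'a : ∀ x, a' (a x) = x)
    (hmm' : ∀ x, m (m' x) = x) (hm'm : ∀ x, m' (m x) = x)
    (hmpos : ∀ x, x < m x)
    (hU : ∀ x, U x = m (a (a (m x))))
    (hTeq : ∀ x, T x = a' (a' (a' (U (a' (a' (a' x)))))))
    (hArel : ∀ x, m' x = a (a (T (a (a (a (T (a (a x)))))))))
    (hS : ∀ x, m' (m' (m' (m' (m' (m' (m' (m' x))))))) ≤ T x) :
    False := by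
  have ha' : StrictMono a' := fun x y h => by
    have h2 : a (a' x) < a (a' y) := by rwa [haa', haa']
    exact ha.lt_iff_lt.mp h2
  have hm' : StrictMono m' := fun x y h => by
    have h2 : m (m' x) < m (m' y) := by rwa [hmm', hmm']
    exact hm.lt_iff_lt.mp h2
  have hUm : StrictMono U := fun x y h => by
    rw [hU, hU]; exact hm (ha (ha (hm h)))
  have hm'lt : ∀ x, m' x < x := fun x => by
    have h := hmpos (m' x); rwa [hmm'] at h
  -- hP : U (a'³ (U x)) = a (m' (a x))   (the relation uα⁻³u = αμ⁻¹α)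
  have hP : ∀ x, U (a' (a' (a' (U x)))) = a (m' (a x)) := by
    intro x
    have h := hArel (a x)
    simp only [hTeq, ha'a, haa'] at h
    rw [h, haa']
  -- L5 : m (a (m x)) < a (m' (a x))   (μαμ < αμ⁻¹α)
  have hL5 : ∀ x, m (a (m x)) < a (m' (a x)) := by
    intro x
    have s1 : a (a (m x)) < U x := by rw [hU]; exact hmpos _
    have s2 : a' (m x) < a' (a' (a' (U x))) := by
      have h2 := ha' (ha' (ha' s1))
      rwa [ha'a, ha'a] at h2
    have s3 : m (a (m x)) < U (a' (m x)) := by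
      have h4 : m (a (a (a' (m x)))) < U (a' (m x)) := by
        rw [hU]; exact hm (ha (ha (hmpos _)))
      rwa [haa'] at h4
    calc m (a (m x)) < U (a' (m x)) := s3
      _ < U (a' (a' (a' (U x)))) := hUm s2
      _ = a (m' (a x)) := hP x
  -- L6 : m (m x) < a x   (α > μ²)
  have hL6 : ∀ x, m (m x) < a x := by
    by_contra hcon
    push_neg at hcon
    obtain ⟨x, hx⟩ := hcon
    have h1 : m' (a x) ≤ m x := by
      have h := hm'.monotone hx
      rwa [hm'm] at h
    have h2 : a (m' (a x)) ≤ a (m x) := ha.monotone h1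
    have h3 := hL5 x
    have h4 : a (m x) < m (a (m x)) := hmpos _
    linarith
  -- c2 : m⁴ x < a (a x)
  have c2 : ∀ x, m (m (m (m x))) < a (a x) := by
    intro x
    calc m (m (m (m x))) < a (m (m x)) := hL6 _
      _ < a (a x) := ha (hL6 x)
  -- c3 : a'² w < m'⁴ w
  have c3 : ∀ w, a' (a' w) < m' (m' (m' (m' w))) := by
    intro w
    have h := c2 (a' (a' w))
    rw [haa', haa'] at h
    have h2 := hm' (hm' (hm' (hm' h)))
    rwa [hm'm, hm'm, hm'm, hm'm] at h2
  -- hM8 : a² (m'⁸ (a³ (m'⁸ (a² x)))) ≤ m' x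
  have hM8 : ∀ x, a (a (m' (m' (m' (m' (m' (m' (m' (m' (a (a (a (m' (m' (m' (m' (m' (m' (m' (m' (a (a x)))))))))))))))))))))) ≤ m' x := by
    intro x
    have h1 := hS (a (a x))
    have h2 := hTm (ha.monotone (ha.monotone (ha.monotone h1)))
    have h3 := hS (a (a (a (m' (m' (m' (m' (m' (m' (m' (m' (a (a x)))))))))))))
    have h4 := le_trans h3 h2
    have h5 := ha.monotone (ha.monotone h4)
    rwa [← hArel] at h5
  -- hY : a³ z ≤ m⁸ (a'² (m' (a'² (m⁸ z))))
  have hY : ∀ z, a (a (a z)) ≤ m (m (m (m (m (m (m (m (a' (a' (m' (a' (a' (m (m (m (m (m (m (m (m z)))))))))))))))))))) := by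
    intro z
    have h1 := hM8 (a' (a' (m (m (m (m (m (m (m (m z))))))))))
    simp only [haa', hm'm] at h1
    have h2 := ha'.monotone (ha'.monotone h1)
    simp only [ha'a] at h2
    have h3 := hm.monotone (hm.monotone (hm.monotone (hm.monotone (hm.monotone (hm.monotone (hm.monotone (hm.monotone h2)))))))
    simp only [hmm'] at h3
    exact h3
  -- hO7 : a³ z < m⁷ z
  have hO7 : ∀ z, a (a (a z)) < m (m (m (m (m (m (m z)))))) := by
    intro z
    have g2 := c3 (m (m (m (m (m (m (m (m z))))))))
    simp only [hm'm] at g2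
    have g3 := hm'.monotone g2.le
    simp only [hm'm] at g3
    have g4 : a' (a' (m' (a' (a' (m (m (m (m (m (m (m (m z)))))))))))) < m' z := by
      have g4a := ha'.monotone (ha'.monotone g3)
      have g4b := c3 (m (m (m z)))
      simp only [hm'm] at g4b
      exact lt_of_le_of_lt g4a g4b
    have g5 := hm (hm (hm (hm (hm (hm (hm (hm g4)))))))
    simp only [hmm'] at g5
    calc a (a (a z)) ≤ _ := hY z
      _ < m (m (m (m (m (m (m z)))))) := g5
  -- c4 : m'⁷ w < a'³ w
  have c4 : ∀ w, m' (m' (m' (m' (m' (m' (m' w)))))) < a' (a' (a' w)) := by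
    intro w
    have h := hO7 (a' (a' (a' w)))
    rw [haa', haa', haa'] at h
    have h2 := hm'.monotone h.le
    simp only [hm'm] at h2
    have h3 := hm' (hm' (hm' (hm' (hm' (hm' (hm' h))))))
    simp only [hm'm] at h3
    exact h3
  -- c5 : m (a (m x)) < a (a x)
  have c5 : ∀ x, m (a (m x)) < a (a x) := by
    intro x
    calc m (a (m x)) < a (m' (a x)) := hL5 x
      _ < a (a x) := ha (hm'lt (a x))
  -- c6 : m² (a (m² z)) < U z
  have c6 : ∀ z, m (m (a (m (m z)))) < U z := by
    intro z
    have h := hm (c5 (m z))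
    rwa [← hU] at h
  -- hBB : m⁵ x < a (m' (a x))
  have hBB : ∀ x, m (m (m (m (m x)))) < a (m' (a x)) := by
    intro x
    -- w₃ = m (m (a (m (m x)))),  Y = a (m (m x)),  z = a'³ w₃
    set Y := a (m (m x)) with hY0
    set z := a' (a' (a' (m (m Y)))) with hz
    have stepB : z < a' (a' (a' (U x))) := ha' (ha' (ha' (c6 x)))
    have stepC : U z < a (m' (a x)) := by
      rw [← hP x]; exact hUm stepB
    have stepD : m (m (a (m (m z)))) < U z := c6 z
    have stepE : m' (m' (m' (m' (m' Y)))) < z := by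
      have h := c4 (m (m Y))
      simp only [hm'm] at h
      exact h
    have stepE2 : m' (m' (m' Y)) < m (m z) := by
      have h := hm (hm stepE)
      simp only [hmm'] at h
      exact h
    have stepG : m' Y < a (m (m z)) := by
      have g1 : m (m (m' (m' (m' Y)))) < a (m' (m' (m' Y))) := hL6 _
      simp only [hmm'] at g1
      exact lt_trans g1 (ha stepE2)
    have stepH : m Y < m (m (a (m (m z)))) := by
      have h := hm (hm stepG)
      simp only [hmm'] at h
      exact h
    have stepI : m (m (m (m (m x)))) < m Y := by
      have h := hm (hL6 (m (m x)))
      exact h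
    calc m (m (m (m (m x)))) < m Y := stepI
      _ < m (m (a (m (m z)))) := stepH
      _ < U z := stepD
      _ < a (m' (a x)) := stepC
  -- c7 : m⁵ x < a (a x)
  have c7 : ∀ x, m (m (m (m (m x)))) < a (a x) := by
    intro x
    calc m (m (m (m (m x)))) < a (m' (a x)) := hBB x
      _ < a (a x) := ha (hm'lt (a x))
  -- c8 : a'² w < m'⁵ w
  have c8 : ∀ w, a' (a' w) < m' (m' (m' (m' (m' w)))) := by
    intro w
    have h := c7 (a' (a' w))
    rw [haa', haa'] at h
    have h2 := hm' (hm' (hm' (hm' (hm' h))))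
    simp only [hm'm] at h2
    exact h2
  -- final contradiction at z = 0
  have f1 := hY 0
  have f2 := c8 (m (m (m (m (m (m (m (m (0:ℝ)))))))))
  simp only [hm'm] at f2
  have f3 := hm'.monotone f2.le
  simp only [hm'm] at f3
  have f4 : a' (a' (m' (a' (a' (m (m (m (m (m (m (m (m (0:ℝ)))))))))))))
      < m' (m' (m' (0:ℝ))) := by
    have g := ha'.monotone (ha'.monotone f3)
    have g2 := c8 (m (m (0:ℝ)))
    simp only [hm'm] at g2
    exact lt_of_le_of_lt g g2
  have f5 := hm (hm (hm (hm (hm (hm (hm (hm f4)))))))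
  simp only [hmm'] at f5
  have f6 : a (a (a (0:ℝ))) < m (m (m (m (m (0:ℝ))))) := lt_of_le_of_lt f1 f5
  have f7 : m (m (m (m (m (m (m (0:ℝ))))))) < a (a (a (0:ℝ))) := by
    have g1 := c7 (a (0:ℝ))
    have g2 := hL6 (0:ℝ)
    have g3 := hm (hm (hm (hm (hm g2))))
    exact lt_trans g3 g1
  have f8 : m (m (m (m (m (0:ℝ))))) < m (m (m (m (m (m (m (0:ℝ))))))) := by
    have g1 := hmpos (m (m (m (m (m (0:ℝ))))))
    have g2 := hmpos (m (m (m (m (m (m (0:ℝ)))))))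
    linarith
  linarith

/-- Final step of Proposition "real": if `xκ > x` for all `x ∈ ℝ`, then
`xκ^{18q−p} > xκ^{8q}` for all `x`, hence `18q − p > 8q`, i.e. `p/q < 10`. -/
theorem final_step_p_lt_ten_q (α β κ μ : ℝ ≃o ℝ) (p q : ℤ) (hq : 0 < q)
    -- the relation α²βα²β²α⁻¹β² = 1, read as a right action
    (hrel : ∀ x : ℝ, β (β (α.symm (β (β (α (α (β (α (α x))))))))) = x)
    -- μ = α⁻¹β⁻²
    (hμ : ∀ x : ℝ, μ x = β.symm (β.symm (α.symm x)))
    -- μ = κ^q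
    (hμκ : ∀ x : ℝ, μ x = (κ ^ q) x)
    -- κ^{p-18q} = α⁻²βα⁻¹
    (hκ : ∀ x : ℝ, (κ ^ (p - 18 * q)) x = α.symm (β (α.symm (α.symm x))))
    (hκpos : ∀ x : ℝ, x < κ x) :
    (∀ x : ℝ, (κ ^ (8 * q)) x < (κ ^ (18 * q - p)) x) ∧
    8 * q < 18 * q - p ∧ p < 10 * q := by
  have hμpos : ∀ x : ℝ, x < μ x := fun x => by
    rw [hμκ]; exact kpow_lt κ hκpos q hq x
  -- β² = μ⁻¹α⁻¹ pointwise
  have hkey : ∀ x : ℝ, β (β (μ x)) = α.symm x := by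
    intro x
    rw [hμ, β.apply_symm_apply, β.apply_symm_apply]
  have hb2 : ∀ y : ℝ, β (β y) = α.symm (μ.symm y) := by
    intro y
    have h := hkey (μ.symm y)
    rwa [μ.apply_symm_apply] at h
  -- the relation, rewritten: α²βα² = αμα²μ  (right-action words)
  have hR' : ∀ x : ℝ, α (α (β (α (α x)))) = μ (α (α (μ (α x)))) := by
    intro x
    have h := hrel x
    rw [hb2, hb2] at h
    have h2 := congrArg (fun w => μ (α (α (μ (α w))))) h
    simp only [OrderIso.apply_symm_apply] at h2
    exact h2
  have hb : ∀ w : ℝ, β w = α.symm (α.symm (μ (α (α (μ (α.symm w)))))) := by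
    intro w
    have h := hR' (α.symm (α.symm w))
    simp only [OrderIso.apply_symm_apply] at h
    have h2 := congrArg (fun z => α.symm (α.symm z)) h
    simp only [OrderIso.symm_apply_apply] at h2
    exact h2
  have hTeq : ∀ x : ℝ, (κ ^ (p - 18 * q)) x
      = α.symm (α.symm (α.symm (μ (α (α (μ (α.symm (α.symm (α.symm x))))))))) := by
    intro x
    rw [hκ x, hb (α.symm (α.symm x))]
  have hβeq : ∀ x : ℝ, β x = α ((κ ^ (p - 18 * q)) (α (α x))) := by
    intro x
    rw [hκ (α (α x))]
    simp only [OrderIso.apply_symm_apply, OrderIso.symm_apply_apply]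
  have hArel : ∀ x : ℝ, μ.symm x
      = α (α ((κ ^ (p - 18 * q)) (α (α (α ((κ ^ (p - 18 * q)) (α (α x)))))))) := by
    intro x
    have h1 : α.symm (μ.symm x) = β (β x) := (hb2 x).symm
    rw [hβeq (β x), hβeq x] at h1
    have h2 := congrArg (fun z => α z) h1
    simp only [OrderIso.apply_symm_apply] at h2
    exact h2
  have hple : p < 10 * q := by
    by_contra hge
    push_neg at hge
    -- hge : 10 * q ≤ p
    have h8 : ∀ y : ℝ, μ (μ (μ (μ (μ (μ (μ (μ y))))))) = (κ ^ (8 * q)) y := by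
      intro y
      simp only [hμκ]
      rw [← kpow_apply_add, ← kpow_apply_add, ← kpow_apply_add, ← kpow_apply_add,
        ← kpow_apply_add, ← kpow_apply_add, ← kpow_apply_add,
        show q + q + q + q + q + q + q + q = 8 * q by ring]
    have hS : ∀ x : ℝ, μ.symm (μ.symm (μ.symm (μ.symm (μ.symm (μ.symm (μ.symm (μ.symm x)))))))
        ≤ (κ ^ (p - 18 * q)) x := by
      intro x
      have hx : x ≤ μ (μ (μ (μ (μ (μ (μ (μ ((κ ^ (p - 18 * q)) x)))))))) := by
        rw [h8, ← kpow_apply_add]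
        exact kpow_le κ hκpos (8 * q + (p - 18 * q)) (by omega) x
      have h2 := μ.symm.monotone (μ.symm.monotone (μ.symm.monotone (μ.symm.monotone
        (μ.symm.monotone (μ.symm.monotone (μ.symm.monotone (μ.symm.monotone hx)))))))
      simp only [OrderIso.symm_apply_apply] at h2
      exact h2
    exact aux_false (⇑α) (⇑α.symm) (⇑μ) (⇑μ.symm) (⇑(κ ^ (p - 18 * q)))
      (fun x => μ (α (α (μ x))))
      α.strictMono μ.strictMono (κ ^ (p - 18 * q)).monotone
      α.apply_symm_apply α.symm_apply_apply μ.apply_symm_apply μ.symm_apply_apply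
      hμpos (fun _ => rfl) hTeq hArel hS
  refine ⟨?_, by omega, hple⟩
  intro x
  have h1 : (κ ^ (18 * q - p)) x = (κ ^ (8 * q)) ((κ ^ (10 * q - p)) x) := by
    rw [← kpow_apply_add, show 8 * q + (10 * q - p) = 18 * q - p by ring]
  rw [h1]
  exact (κ ^ (8 * q)).strictMono (kpow_lt κ hκpos (10 * q - p) (by omega) x)
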